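/- Let V be a Hilbert space, and let V_1, ..., V_M be closed subspaces of V that can be partitioned into M_O classes such that within each class, any two distinct subspaces are orthogonal. Then for any continuous linear functional F on V, the square root of the sum over i of the squared dual norms ||F||_{V_i'}^2 is bounded by sqrt(M_O) times the dual norm ||F||_{V'}. -/

import Mathlib

set_option maxHeartbeats 800000
set_option synthInstance.maxHeartbeats 200000


open scoped RealInnerProductSpace

lemma bessel_aux {V : Type*} [NormedAddCommGroup V] [InnerProductSpace ℝ V]
    {ι : Type*} (z : V) (s : Finset ι) (v : ι → V)
    (horth : ∀ i ∈ s, ∀ j ∈ s, i ≠ j → ⟪v i, v j⟫ = 0)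
    (hz : ∀ i ∈ s, ⟪z, v i⟫ = ‖v i‖ ^ 2) :
    ∑ i ∈ s, ‖v i‖ ^ 2 ≤ ‖z‖ ^ 2 := by
  set S := ∑ i ∈ s, v i with hS
  have hSS : ⟪S, S⟫ = ∑ i ∈ s, ‖v i‖ ^ 2 := by
    rw [hS, inner_sum]
    refine Finset.sum_congr rfl fun i hi => ?_
    rw [sum_inner]
    rw [Finset.sum_eq_single i]
    · rw [real_inner_self_eq_norm_sq]
    · intro j hj hji
      exact horth j hj i hi hji
    · intro h; exact absurd hi h
  have hzS : ⟪z, S⟫ = ∑ i ∈ s, ‖v i‖ ^ 2 := by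
    rw [hS, inner_sum]
    exact Finset.sum_congr rfl hz
  have h0 : (0 : ℝ) ≤ ‖z - S‖ ^ 2 := sq_nonneg _
  have hexp : ‖z - S‖ ^ 2 = ‖z‖ ^ 2 - 2 * ⟪z, S⟫ + ‖S‖ ^ 2 := by
    rw [@norm_sub_sq_real]
  have hSn : ‖S‖ ^ 2 = ∑ i ∈ s, ‖v i‖ ^ 2 := by
    rw [← real_inner_self_eq_norm_sq, hSS]
  rw [hexp, hzS, hSn] at h0
  linarith

theorem dual_norm_localization_efficiency
    {V : Type*} [NormedAddCommGroup V] [InnerProductSpace ℝ V] [CompleteSpace V]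
    {M MO : ℕ} (Vs : Fin M → Submodule ℝ V)
    (hclosed : ∀ i, IsClosed ((Vs i : Set V)))
    (cl : Fin M → Fin MO)
    (horth : ∀ i j, i ≠ j → cl i = cl j → ∀ x ∈ Vs i, ∀ y ∈ Vs j, ⟪x, y⟫ = 0)
    (F : V →L[ℝ] ℝ) :
    Real.sqrt (∑ i, ‖F.comp (Vs i).subtypeL‖ ^ 2) ≤ Real.sqrt MO * ‖F‖ := by
  haveI : ∀ i, CompleteSpace (Vs i) := fun i => (hclosed i).completeSpace_coe
  set z := (InnerProductSpace.toDual ℝ V).symm F with hzdef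
  have hFz : ∀ x : V, F x = ⟪z, x⟫ := by
    intro x
    rw [hzdef, InnerProductSpace.toDual_symm_apply]
  have hnormF : ‖F‖ = ‖z‖ := by
    rw [hzdef, ← LinearIsometryEquiv.norm_map (InnerProductSpace.toDual ℝ V)]
    simp
  set P : Fin M → V := fun i => (Submodule.orthogonalProjectionOnto (Vs i) z : V) with hP
  have hPmem : ∀ i, P i ∈ Vs i := fun i => (Submodule.orthogonalProjectionOnto (Vs i) z).2
  have hinner : ∀ i, ∀ x ∈ Vs i, ⟪z, x⟫ = ⟪P i, x⟫ := by
    intro i x hx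
    have := Submodule.starProjection_inner_eq_zero (K := Vs i) z x hx
    have h2 : ⟪z - P i, x⟫ = 0 := this
    rw [inner_sub_left] at h2
    linarith
  -- local dual norm bounded by ‖P i‖
  have hle : ∀ i, ‖F.comp (Vs i).subtypeL‖ ≤ ‖P i‖ := by
    intro i
    apply ContinuousLinearMap.opNorm_le_bound _ (norm_nonneg _)
    intro x
    have : F (x : V) = ⟪P i, (x : V)⟫ := by rw [hFz, hinner i x x.2]
    simp only [ContinuousLinearMap.comp_apply, Submodule.subtypeL_apply]
    rw [this]
    calc |⟪P i, (x : V)⟫| ≤ ‖P i‖ * ‖(x : V)‖ := abs_real_inner_le_norm _ _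
      _ = ‖P i‖ * ‖x‖ := rfl
  have key : ∑ i, ‖F.comp (Vs i).subtypeL‖ ^ 2 ≤ (MO : ℝ) * ‖F‖ ^ 2 := by
    have step1 : ∑ i, ‖F.comp (Vs i).subtypeL‖ ^ 2 ≤ ∑ i, ‖P i‖ ^ 2 := by
      apply Finset.sum_le_sum
      intro i _
      have h1 : (0:ℝ) ≤ ‖F.comp (Vs i).subtypeL‖ := ContinuousLinearMap.opNorm_nonneg _
      nlinarith [hle i]
    have step2 : ∑ i, ‖P i‖ ^ 2 ≤ (MO : ℝ) * ‖z‖ ^ 2 := by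
      have grp : ∑ i, ‖P i‖ ^ 2
          = ∑ k : Fin MO, ∑ i ∈ Finset.univ.filter (fun i => cl i = k), ‖P i‖ ^ 2 := by
        rw [Finset.sum_fiberwise Finset.univ cl (fun i => ‖P i‖ ^ 2)]
      rw [grp]
      calc ∑ k : Fin MO, ∑ i ∈ Finset.univ.filter (fun i => cl i = k), ‖P i‖ ^ 2
          ≤ ∑ _k : Fin MO, ‖z‖ ^ 2 := by
            apply Finset.sum_le_sum
            intro k _
            apply bessel_aux z _ P
            · intro i hi j hj hij
              simp only [Finset.mem_filter, Finset.mem_univ, true_and] at hi hj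
              exact horth i j hij (hi.trans hj.symm) (P i) (hPmem i) (P j) (hPmem j)
            · intro i _
              rw [hinner i (P i) (hPmem i), real_inner_self_eq_norm_sq]
        _ = (MO : ℝ) * ‖z‖ ^ 2 := by
            rw [Finset.sum_const, Finset.card_univ, Fintype.card_fin, nsmul_eq_mul]
      
    calc ∑ i, ‖F.comp (Vs i).subtypeL‖ ^ 2 ≤ ∑ i, ‖P i‖ ^ 2 := step1
      _ ≤ (MO : ℝ) * ‖z‖ ^ 2 := step2
      _ = (MO : ℝ) * ‖F‖ ^ 2 := by rw [hnormF]
  calc Real.sqrt (∑ i, ‖F.comp (Vs i).subtypeL‖ ^ 2)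
      ≤ Real.sqrt ((MO : ℝ) * ‖F‖ ^ 2) := Real.sqrt_le_sqrt key
    _ = Real.sqrt MO * ‖F‖ := by
        rw [Real.sqrt_mul (Nat.cast_nonneg MO), Real.sqrt_sq (norm_nonneg F)]
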